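/- arXiv:2111.14917 — 2 statements merged into one kernel-verified Lean document; each statement's English description precedes it below -/
import Mathlib

section
/- Negative association is preserved under monotone maps on disjoint blocks: if X_1,...,X_n are negatively associated, I_1,...,I_m is a partition of {1,...,n}, and each f_j : ℝ^{|I_j|} → ℝ is monotone non-decreasing, then the random variables Y_j = f_j(X_k, k ∈ I_j), j = 1,...,m, are negatively associated. -/
open Finset

/-- Expectation on a finite probability space with weight function `p`. -/
def expect {Ω : Type*} [Fintype Ω] (p : Ω → ℝ) (f : Ω → ℝ) : ℝ :=
  ∑ ω, p ω * f ω

/-- `f` depends only on the coordinates in `I`. -/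
def FnDependsOn {ι : Type*} (f : (ι → ℝ) → ℝ) (I : Finset ι) : Prop :=
  ∀ x y : ι → ℝ, (∀ i ∈ I, x i = y i) → f x = f y

/-- `f` is monotone non-decreasing in the coordinatewise order. -/
def MonoFn {ι : Type*} (f : (ι → ℝ) → ℝ) : Prop :=
  ∀ x y : ι → ℝ, (∀ i, x i ≤ y i) → f x ≤ f y

/-- `f` is bounded. -/
def BddFn {ι : Type*} (f : (ι → ℝ) → ℝ) : Prop :=
  ∃ C, ∀ x, |f x| ≤ C

/-- The family `{X_i : i ∈ T}` is negatively associated under `p`: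
for all disjoint `I, J ⊆ T` and all pairs of bounded monotone non-decreasing
functions `f` (depending only on `I`) and `g` (depending only on `J`),
`E[f·g] ≤ E[f]·E[g]`. -/
def NegAssoc {Ω ι : Type*} [Fintype Ω] (p : Ω → ℝ) (T : Finset ι)
    (X : ι → Ω → ℝ) : Prop :=
  ∀ I J : Finset ι, I ⊆ T → J ⊆ T → Disjoint I J →
    ∀ f g : (ι → ℝ) → ℝ, FnDependsOn f I → FnDependsOn g J →
      MonoFn f → MonoFn g → BddFn f → BddFn g →
        expect p (fun ω => f (fun i => X i ω) * g (fun i => X i ω)) ≤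
          expect p (fun ω => f (fun i => X i ω)) *
            expect p (fun ω => g (fun i => X i ω))

/-- Negative association is preserved under monotone maps applied to
disjoint blocks of a partition of the variables. -/
theorem negAssoc_monotone_map {Ω : Type*} [Fintype Ω] {n m : ℕ} (p : Ω → ℝ)
    (hp : ∀ ω, 0 ≤ p ω) (hsum : ∑ ω, p ω = 1)
    (X : Fin n → Ω → ℝ) (hX : NegAssoc p Finset.univ X)
    (I : Fin m → Finset (Fin n))
    (hdisj : ∀ j k : Fin m, j ≠ k → Disjoint (I j) (I k))
    (hcover : ∀ i : Fin n, ∃ j : Fin m, i ∈ I j)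
    (f : Fin m → (Fin n → ℝ) → ℝ)
    (hdep : ∀ j, FnDependsOn (f j) (I j))
    (hmono : ∀ j, MonoFn (f j)) :
    NegAssoc p Finset.univ (fun j ω => f j (fun k => X k ω)) := by
  intro J1 J2 _ _ hJ F G hFdep hGdep hFmono hGmono hFbdd hGbdd
  exact hX (J1.biUnion I) (J2.biUnion I) (Finset.subset_univ _) (Finset.subset_univ _)
    (by
      rw [Finset.disjoint_left]
      intro a ha hb
      simp only [Finset.mem_biUnion] at ha hb
      obtain ⟨j, hj, haj⟩ := ha
      obtain ⟨k, hk, hak⟩ := hb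
      have hjk : j ≠ k := fun h => Finset.disjoint_left.mp hJ hj (h ▸ hk)
      exact Finset.disjoint_left.mp (hdisj j k hjk) haj hak)
    (fun x => F (fun j => f j x)) (fun x => G (fun j => f j x))
    (fun x y hxy => hFdep _ _ (fun j hj =>
      hdep j x y (fun i hi => hxy i (Finset.mem_biUnion.mpr ⟨j, hj, hi⟩))))
    (fun x y hxy => hGdep _ _ (fun j hj =>
      hdep j x y (fun i hi => hxy i (Finset.mem_biUnion.mpr ⟨j, hj, hi⟩))))
    (fun x y hxy => hFmono _ _ (fun j => hmono j x y hxy))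
    (fun x y hxy => hGmono _ _ (fun j => hmono j x y hxy))
    (hFbdd.imp fun _ hC x => hC _) (hGbdd.imp fun _ hC x => hC _)
end

section
/- Two-sided Chernoff–Hoeffding bound for negatively associated variables (covariance step): if X_1,...,X_n are negatively associated random variables, then for every real t, E[exp(t·∑ X_i)] ≤ ∏_i E[exp(t·X_i)]. -/
open Finset

lemma expect_add' {Ω : Type*} [Fintype Ω] (p f g : Ω → ℝ) :
    expect p (fun ω => f ω + g ω) = expect p f + expect p g := by
  simp [_root_.expect, mul_add, Finset.sum_add_distrib]

lemma expect_sub' {Ω : Type*} [Fintype Ω] (p f g : Ω → ℝ) :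
    expect p (fun ω => f ω - g ω) = expect p f - expect p g := by
  simp [_root_.expect, mul_sub, Finset.sum_sub_distrib]

lemma expect_const' {Ω : Type*} [Fintype Ω] (p : Ω → ℝ) (hsum : ∑ ω, p ω = 1) (c : ℝ) :
    expect p (fun _ => c) = c := by
  rw [_root_.expect, ← Finset.sum_mul, hsum, one_mul]

lemma expect_const_mul' {Ω : Type*} [Fintype Ω] (p : Ω → ℝ) (c : ℝ) (f : Ω → ℝ) :
    expect p (fun ω => c * f ω) = c * expect p f := by
  rw [_root_.expect, _root_.expect, Finset.mul_sum]
  exact Finset.sum_congr rfl fun ω _ => by ring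

lemma expect_nonneg' {Ω : Type*} [Fintype Ω] {p f : Ω → ℝ} (hp : ∀ ω, 0 ≤ p ω)
    (hf : ∀ ω, 0 ≤ f ω) : 0 ≤ expect p f :=
  Finset.sum_nonneg fun ω _ => mul_nonneg (hp ω) (hf ω)

/-- NA also holds for pairs of antitone bounded functions. -/
lemma negAssoc_antitone {Ω ι : Type*} [Fintype Ω] {p : Ω → ℝ}
    (hsum : ∑ ω, p ω = 1) {T : Finset ι} {X : ι → Ω → ℝ}
    (hX : NegAssoc p T X)
    (I J : Finset ι) (hI : I ⊆ T) (hJ : J ⊆ T) (hIJ : Disjoint I J)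
    (f g : (ι → ℝ) → ℝ) (hfI : FnDependsOn f I) (hgJ : FnDependsOn g J)
    (hf : ∀ x y : ι → ℝ, (∀ i, x i ≤ y i) → f y ≤ f x)
    (hg : ∀ x y : ι → ℝ, (∀ i, x i ≤ y i) → g y ≤ g x)
    (hbf : BddFn f) (hbg : BddFn g) :
    expect p (fun ω => f (fun i => X i ω) * g (fun i => X i ω)) ≤
      expect p (fun ω => f (fun i => X i ω)) *
        expect p (fun ω => g (fun i => X i ω)) := by
  obtain ⟨Cf, hCf⟩ := hbf
  obtain ⟨Cg, hCg⟩ := hbg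
  set F : (ι → ℝ) → ℝ := fun x => Cf - f x with hF
  set G : (ι → ℝ) → ℝ := fun x => Cg - g x with hG
  have key := hX I J hI hJ hIJ F G
    (fun x y h => by simp only [hF]; rw [hfI x y h])
    (fun x y h => by simp only [hG]; rw [hgJ x y h])
    (fun x y h => by simp only [hF]; linarith [hf x y h])
    (fun x y h => by simp only [hG]; linarith [hg x y h])
    ⟨|Cf| + Cf, fun x => (abs_sub _ _).trans (by linarith [hCf x, abs_nonneg (f x)])⟩
    ⟨|Cg| + Cg, fun x => (abs_sub _ _).trans (by linarith [hCg x, abs_nonneg (g x)])⟩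
  set fo : Ω → ℝ := fun ω => f (fun i => X i ω) with hfo
  set go : Ω → ℝ := fun ω => g (fun i => X i ω) with hgo
  have e1 : expect p (fun ω => F (fun i => X i ω) * G (fun i => X i ω)) =
      Cf * Cg - (Cg * expect p fo + Cf * expect p go) + expect p (fun ω => fo ω * go ω) := by
    have : (fun ω => F (fun i => X i ω) * G (fun i => X i ω)) =
        fun ω => (Cf * Cg - (Cg * fo ω + Cf * go ω)) + fo ω * go ω := by
      funext ω; simp only [hF, hG]; ring
    rw [this, expect_add', expect_sub' p _ (fun ω => Cg * fo ω + Cf * go ω),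
      expect_const' p hsum, expect_add', expect_const_mul', expect_const_mul']
  have e2 : expect p (fun ω => F (fun i => X i ω)) = Cf - expect p fo := by
    simp only [hF]; rw [expect_sub' p (fun _ => Cf) fo, expect_const' p hsum]
  have e3 : expect p (fun ω => G (fun i => X i ω)) = Cg - expect p go := by
    simp only [hG]; rw [expect_sub' p (fun _ => Cg) go, expect_const' p hsum]
  rw [e1, e2, e3] at key
  have : expect p (fun ω => fo ω * go ω) ≤ expect p fo * expect p go := by nlinarith [key]
  exact this

lemma mgf_aux {Ω ι : Type*} [Fintype Ω] [DecidableEq ι]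
    (p : Ω → ℝ) (hp : ∀ ω, 0 ≤ p ω) (hsum : ∑ ω, p ω = 1)
    (T : Finset ι) (X : ι → Ω → ℝ) (hX : NegAssoc p T X) (t : ℝ) :
    ∀ S : Finset ι, S ⊆ T →
      expect p (fun ω => Real.exp (t * ∑ i ∈ S, X i ω)) ≤
        ∏ i ∈ S, expect p (fun ω => Real.exp (t * X i ω)) := by
  intro S
  induction S using Finset.induction with
  | empty =>
    intro _
    simp [expect_const' p hsum]
  | @insert a s ha ih =>
    intro hsub
    have haT : a ∈ T := hsub (Finset.mem_insert_self a s)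
    have hsT : s ⊆ T := fun i hi => hsub (Finset.mem_insert_of_mem hi)
    -- truncation constants
    set Ca : ℝ := ∑ ω, Real.exp (t * X a ω) with hCa
    set Cs : ℝ := ∑ ω, Real.exp (t * ∑ j ∈ s, X j ω) with hCs
    have hCa0 : 0 ≤ Ca := Finset.sum_nonneg fun ω _ => (Real.exp_pos _).le
    have hCs0 : 0 ≤ Cs := Finset.sum_nonneg fun ω _ => (Real.exp_pos _).le
    have hCale : ∀ ω, Real.exp (t * X a ω) ≤ Ca := fun ω =>
      Finset.single_le_sum (fun ω' _ => (Real.exp_pos (t * X a ω')).le) (Finset.mem_univ ω)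
    have hCsle : ∀ ω, Real.exp (t * ∑ j ∈ s, X j ω) ≤ Cs := fun ω =>
      Finset.single_le_sum (f := fun ω' => Real.exp (t * ∑ j ∈ s, X j ω'))
        (fun ω' _ => (Real.exp_pos _).le) (Finset.mem_univ ω)
    set f : (ι → ℝ) → ℝ := fun x => min (Real.exp (t * x a)) Ca with hf
    set g : (ι → ℝ) → ℝ := fun x => min (Real.exp (t * ∑ j ∈ s, x j)) Cs with hg
    have hfval : ∀ ω, f (fun i => X i ω) = Real.exp (t * X a ω) := fun ω =>
      min_eq_left (hCale ω)
    have hgval : ∀ ω, g (fun i => X i ω) = Real.exp (t * ∑ j ∈ s, X j ω) := fun ω =>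
      min_eq_left (hCsle ω)
    have hdf : FnDependsOn f {a} := fun x y h => by
      simp only [hf, h a (Finset.mem_singleton_self a)]
    have hdg : FnDependsOn g s := fun x y h => by
      simp only [hg]; rw [Finset.sum_congr rfl h]
    have hdisj : Disjoint ({a} : Finset ι) s := Finset.disjoint_singleton_left.mpr ha
    have hbf : BddFn f := ⟨Ca, fun x => by
      rw [abs_of_nonneg (le_min (Real.exp_pos _).le hCa0)]; exact min_le_right _ _⟩
    have hbg : BddFn g := ⟨Cs, fun x => by
      rw [abs_of_nonneg (le_min (Real.exp_pos _).le hCs0)]; exact min_le_right _ _⟩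
    have haTs : ({a} : Finset ι) ⊆ T := Finset.singleton_subset_iff.mpr haT
    -- the covariance inequality, by cases on the sign of t
    have key : expect p (fun ω => f (fun i => X i ω) * g (fun i => X i ω)) ≤
        expect p (fun ω => f (fun i => X i ω)) *
          expect p (fun ω => g (fun i => X i ω)) := by
      rcases le_total 0 t with ht | ht
      · exact hX {a} s haTs hsT hdisj f g hdf hdg
          (fun x y h => min_le_min (Real.exp_le_exp.mpr
            (mul_le_mul_of_nonneg_left (h a) ht)) le_rfl)
          (fun x y h => min_le_min (Real.exp_le_exp.mpr
            (mul_le_mul_of_nonneg_left (Finset.sum_le_sum fun j _ => h j) ht)) le_rfl)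
          hbf hbg
      · exact negAssoc_antitone hsum hX {a} s haTs hsT hdisj f g hdf hdg
          (fun x y h => min_le_min (Real.exp_le_exp.mpr
            (mul_le_mul_of_nonpos_left (h a) ht)) le_rfl)
          (fun x y h => min_le_min (Real.exp_le_exp.mpr
            (mul_le_mul_of_nonpos_left (Finset.sum_le_sum fun j _ => h j) ht)) le_rfl)
          hbf hbg
    have hsplit : (fun ω => Real.exp (t * ∑ i ∈ insert a s, X i ω)) =
        fun ω => f (fun i => X i ω) * g (fun i => X i ω) := by
      funext ω
      rw [hfval ω, hgval ω, Finset.sum_insert ha, mul_add, Real.exp_add]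
    rw [hsplit, Finset.prod_insert ha]
    calc expect p (fun ω => f (fun i => X i ω) * g (fun i => X i ω)) ≤
        expect p (fun ω => f (fun i => X i ω)) *
          expect p (fun ω => g (fun i => X i ω)) := key
      _ ≤ expect p (fun ω => Real.exp (t * X a ω)) *
          ∏ i ∈ s, expect p (fun ω => Real.exp (t * X i ω)) := by
          have h1 : expect p (fun ω => f (fun i => X i ω)) =
              expect p (fun ω => Real.exp (t * X a ω)) := by
            unfold _root_.expect; exact Finset.sum_congr rfl fun ω _ => by simp [hfval ω]
          have h2 : expect p (fun ω => g (fun i => X i ω)) =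
              expect p (fun ω => Real.exp (t * ∑ j ∈ s, X j ω)) := by
            unfold _root_.expect; exact Finset.sum_congr rfl fun ω _ => by simp [hgval ω]
          rw [h1, h2]
          exact mul_le_mul_of_nonneg_left (ih hsT)
            (expect_nonneg' hp fun ω => (Real.exp_pos _).le)


/-- Chernoff–Hoeffding covariance step for negatively associated variables:
the moment generating function of the sum is bounded by the product of the
moment generating functions. -/
theorem mgf_sum_le_prod_of_negAssoc {Ω : Type*} [Fintype Ω] {n : ℕ}
    (p : Ω → ℝ) (hp : ∀ ω, 0 ≤ p ω) (hsum : ∑ ω, p ω = 1)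
    (X : Fin n → Ω → ℝ) (hX : NegAssoc p Finset.univ X) (t : ℝ) :
    expect p (fun ω => Real.exp (t * ∑ i, X i ω)) ≤
      ∏ i, expect p (fun ω => Real.exp (t * X i ω)) := by
  exact mgf_aux p hp hsum Finset.univ X hX t Finset.univ (Finset.Subset.refl _)
end
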